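/- arXiv:2204.11309 — 3 statements merged into one kernel-verified Lean document; each statement's English description precedes it below -/
import Mathlib

section
/- Let μ be a nonatomic Borel probability measure on ℝ with cumulative distribution function F(x) = μ((−∞, x]), and for k ∈ ℤ define e_k : ℝ → ℝ by e_k(x) = √2·sin(2πkx) for k ≥ 1, e_0(x) = 1, and e_k(x) = √2·cos(2π|k|x) for k ≤ −1. Then for all j, k ∈ ℤ: ∫_ℝ e_j(F(x))·e_k(F(x)) dμ(x) = 1 if j = k and = 0 if j ≠ k. -/
open Real MeasureTheory

/-- The standard real Fourier basis on `[0,1]`: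
`e_k(x) = √2·sin(2πkx)` for `k ≥ 1`, `e_0 = 1`, `e_k(x) = √2·cos(2π|k|x)` for `k ≤ -1`. -/
noncomputable def fourierBasisFun (k : ℤ) (x : ℝ) : ℝ :=
  if k = 0 then 1
  else if 0 < k then Real.sqrt 2 * Real.sin (2 * π * (k : ℝ) * x)
  else Real.sqrt 2 * Real.cos (2 * π * ((|k| : ℤ) : ℝ) * x)

section helpers
open Set Filter Topology intervalIntegral

lemma cosInt (n : ℤ) : ∫ y in (0:ℝ)..1, Real.cos (2*π*(n:ℝ)*y) = if n = 0 then 1 else 0 := by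
  rcases eq_or_ne n 0 with h | h
  · simp [h]
  · have hc : (2*π*(n:ℝ)) ≠ 0 := by
      refine mul_ne_zero (by positivity) (Int.cast_ne_zero.2 h)
    rw [if_neg h]
    have : ∀ y : ℝ, Real.cos (2*π*(n:ℝ)*y) = Real.cos (y * (2*π*(n:ℝ))) := fun y => by ring_nf
    simp_rw [this]
    rw [intervalIntegral.integral_comp_mul_right (fun x => Real.cos x) hc, integral_cos]
    have : Real.sin (1 * (2*π*(n:ℝ))) = 0 := by
      have := Real.sin_int_mul_pi (2*n)
      push_cast at this ⊢
      rw [show (1:ℝ) * (2*π*n) = 2*(n:ℝ)*π by ring] at *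
      exact this
    rw [one_mul] at this
    simp [this]

lemma sinInt (n : ℤ) : ∫ y in (0:ℝ)..1, Real.sin (2*π*(n:ℝ)*y) = 0 := by
  rcases eq_or_ne n 0 with h | h
  · simp [h]
  · have hc : (2*π*(n:ℝ)) ≠ 0 := mul_ne_zero (by positivity) (Int.cast_ne_zero.2 h)
    have : ∀ y : ℝ, Real.sin (2*π*(n:ℝ)*y) = Real.sin (y * (2*π*(n:ℝ))) := fun y => by ring_nf
    simp_rw [this]
    rw [intervalIntegral.integral_comp_mul_right (fun x => Real.sin x) hc, integral_sin]
    have : Real.cos (1 * (2*π*(n:ℝ))) = 1 := by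
      have := Real.cos_int_mul_two_pi n
      rw [show (1:ℝ) * (2*π*(n:ℝ)) = (n:ℝ)*(2*π) by ring]
      exact this
    rw [one_mul] at this
    simp [this]

lemma sqrt2_sq : Real.sqrt 2 * Real.sqrt 2 = 2 := Real.mul_self_sqrt (by norm_num)

lemma sinsinInt (a b : ℤ) (hab : a + b ≠ 0) :
    ∫ y in (0:ℝ)..1, (Real.sqrt 2 * Real.sin (2*π*(a:ℝ)*y)) * (Real.sqrt 2 * Real.sin (2*π*(b:ℝ)*y))
      = if a = b then 1 else 0 := by
  have key : ∀ y ∈ Set.uIcc (0:ℝ) 1,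
      (Real.sqrt 2 * Real.sin (2*π*(a:ℝ)*y)) * (Real.sqrt 2 * Real.sin (2*π*(b:ℝ)*y))
        = Real.cos (2*π*((a-b:ℤ):ℝ)*y) - Real.cos (2*π*((a+b:ℤ):ℝ)*y) := by
    intro y _
    rw [show (2*π*((a-b:ℤ):ℝ)*y) = 2*π*(a:ℝ)*y - 2*π*(b:ℝ)*y by push_cast; ring,
        show (2*π*((a+b:ℤ):ℝ)*y) = 2*π*(a:ℝ)*y + 2*π*(b:ℝ)*y by push_cast; ring,
        Real.cos_sub, Real.cos_add]
    linear_combination (Real.sin (2*π*(a:ℝ)*y) * Real.sin (2*π*(b:ℝ)*y)) * sqrt2_sq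
  rw [intervalIntegral.integral_congr key,
    intervalIntegral.integral_sub ((Continuous.intervalIntegrable (by continuity) _ _))
      ((Continuous.intervalIntegrable (by continuity) _ _)), cosInt, cosInt, if_neg hab]
  simp [sub_eq_zero]

lemma coscosInt (a b : ℤ) (hab : a + b ≠ 0) :
    ∫ y in (0:ℝ)..1, (Real.sqrt 2 * Real.cos (2*π*(a:ℝ)*y)) * (Real.sqrt 2 * Real.cos (2*π*(b:ℝ)*y))
      = if a = b then 1 else 0 := by
  have key : ∀ y ∈ Set.uIcc (0:ℝ) 1,
      (Real.sqrt 2 * Real.cos (2*π*(a:ℝ)*y)) * (Real.sqrt 2 * Real.cos (2*π*(b:ℝ)*y))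
        = Real.cos (2*π*((a-b:ℤ):ℝ)*y) + Real.cos (2*π*((a+b:ℤ):ℝ)*y) := by
    intro y _
    rw [show (2*π*((a-b:ℤ):ℝ)*y) = 2*π*(a:ℝ)*y - 2*π*(b:ℝ)*y by push_cast; ring,
        show (2*π*((a+b:ℤ):ℝ)*y) = 2*π*(a:ℝ)*y + 2*π*(b:ℝ)*y by push_cast; ring,
        Real.cos_sub, Real.cos_add]
    linear_combination (Real.cos (2*π*(a:ℝ)*y) * Real.cos (2*π*(b:ℝ)*y)) * sqrt2_sq
  rw [intervalIntegral.integral_congr key,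
    intervalIntegral.integral_add ((Continuous.intervalIntegrable (by continuity) _ _))
      ((Continuous.intervalIntegrable (by continuity) _ _)), cosInt, cosInt, if_neg hab]
  simp [sub_eq_zero]

lemma sincosInt (a b : ℤ) :
    ∫ y in (0:ℝ)..1, (Real.sqrt 2 * Real.sin (2*π*(a:ℝ)*y)) * (Real.sqrt 2 * Real.cos (2*π*(b:ℝ)*y))
      = 0 := by
  have key : ∀ y ∈ Set.uIcc (0:ℝ) 1,
      (Real.sqrt 2 * Real.sin (2*π*(a:ℝ)*y)) * (Real.sqrt 2 * Real.cos (2*π*(b:ℝ)*y))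
        = Real.sin (2*π*((a+b:ℤ):ℝ)*y) + Real.sin (2*π*((a-b:ℤ):ℝ)*y) := by
    intro y _
    rw [show (2*π*((a-b:ℤ):ℝ)*y) = 2*π*(a:ℝ)*y - 2*π*(b:ℝ)*y by push_cast; ring,
        show (2*π*((a+b:ℤ):ℝ)*y) = 2*π*(a:ℝ)*y + 2*π*(b:ℝ)*y by push_cast; ring,
        Real.sin_sub, Real.sin_add]
    linear_combination (Real.sin (2*π*(a:ℝ)*y) * Real.cos (2*π*(b:ℝ)*y)) * sqrt2_sq
  rw [intervalIntegral.integral_congr key,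
    intervalIntegral.integral_add ((Continuous.intervalIntegrable (by continuity) _ _))
      ((Continuous.intervalIntegrable (by continuity) _ _)), sinInt, sinInt]
  norm_num

lemma fbf_zero : fourierBasisFun 0 = fun _ => (1:ℝ) := by
  ext y; simp [fourierBasisFun]

lemma fbf_pos {k : ℤ} (h : 0 < k) :
    fourierBasisFun k = fun y => Real.sqrt 2 * Real.sin (2*π*(k:ℝ)*y) := by
  ext y; simp [fourierBasisFun, h, h.ne']

lemma fbf_neg {k : ℤ} (h : k < 0) :
    fourierBasisFun k = fun y => Real.sqrt 2 * Real.cos (2*π*((-k:ℤ):ℝ)*y) := by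
  ext y; simp [fourierBasisFun, h.ne, not_lt.2 h.le, abs_of_neg h]

lemma ortho (j k : ℤ) :
    ∫ y in (0:ℝ)..1, fourierBasisFun j y * fourierBasisFun k y = if j = k then 1 else 0 := by
  rcases lt_trichotomy j 0 with hj | hj | hj <;> rcases lt_trichotomy k 0 with hk | hk | hk
  · -- j<0, k<0
    rw [fbf_neg hj, fbf_neg hk, coscosInt _ _ (by omega)]
    congr 1
    simp only [eq_iff_iff]
    omega
  · -- j<0, k=0
    subst hk
    rw [fbf_neg hj, fbf_zero]
    simp only [mul_one]
    rw [intervalIntegral.integral_const_mul, cosInt, if_neg (by omega : ¬ -j = 0),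
        mul_zero, if_neg (by omega : ¬ j = 0)]
  · -- j<0, k>0
    rw [fbf_neg hj, fbf_pos hk]
    have : ∀ y ∈ Set.uIcc (0:ℝ) 1,
        (Real.sqrt 2 * Real.cos (2*π*((-j:ℤ):ℝ)*y)) * (Real.sqrt 2 * Real.sin (2*π*(k:ℝ)*y))
        = (Real.sqrt 2 * Real.sin (2*π*(k:ℝ)*y)) * (Real.sqrt 2 * Real.cos (2*π*((-j:ℤ):ℝ)*y)) :=
      fun y _ => by ring
    rw [intervalIntegral.integral_congr this, sincosInt, if_neg (by omega)]
  · -- j=0, k<0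
    subst hj
    rw [fbf_neg hk, fbf_zero]
    simp only [one_mul]
    rw [intervalIntegral.integral_const_mul, cosInt, if_neg (by omega : ¬ -k = 0),
        mul_zero, if_neg (by omega : ¬ (0:ℤ) = k)]
  · -- j=0, k=0
    subst hj; subst hk
    rw [fbf_zero]
    simp
  · -- j=0, k>0
    subst hj
    rw [fbf_pos hk, fbf_zero]
    simp only [one_mul]
    rw [intervalIntegral.integral_const_mul, sinInt, mul_zero, if_neg (by omega : ¬ (0:ℤ) = k)]
  · -- j>0, k<0
    rw [fbf_pos hj, fbf_neg hk, sincosInt, if_neg (by omega)]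
  · -- j>0, k=0
    subst hk
    rw [fbf_pos hj, fbf_zero]
    simp only [mul_one]
    rw [intervalIntegral.integral_const_mul, sinInt, mul_zero, if_neg (by omega : ¬ j = 0)]
  · -- j>0, k>0
    rw [fbf_pos hj, fbf_pos hk, sinsinInt _ _ (by omega)]

open ProbabilityTheory in
lemma measure_part (μ : Measure ℝ) [IsProbabilityMeasure μ] [NullSingletonClass μ]
    (F : ℝ → ℝ) (hF : ∀ x, F x = (μ (Set.Iic x)).toReal) :
    Measure.map F μ = volume.restrict (Set.Ioc 0 1) := by
  have hFc : F = ⇑(cdf μ) := by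
    ext x; rw [hF, cdf_eq_real, measureReal_def]
  have hmono : Monotone F := by rw [hFc]; exact monotone_cdf μ
  -- continuity
  have hcont : Continuous F := by
    rw [continuous_iff_continuousAt]
    intro x
    rw [hmono.continuousAt_iff_leftLim_eq_rightLim]
    have hr : Function.rightLim F x = F x := by rw [hFc]; exact (cdf μ).rightLim_eq x
    have hs : μ {x} = ENNReal.ofReal (F x - Function.leftLim F x) := by
      conv_lhs => rw [← measure_cdf μ]
      rw [hFc]; exact (cdf μ).measure_singleton x
    have h1 : F x ≤ Function.leftLim F x := by
      by_contra h
      push_neg at h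
      have h0 : ENNReal.ofReal (F x - Function.leftLim F x) = 0 := by
        rw [← hs]; exact measure_singleton x
      have := ENNReal.ofReal_eq_zero.1 h0
      linarith
    have h2 : Function.leftLim F x ≤ F x := hmono.leftLim_le le_rfl
    rw [hr]; exact le_antisymm h2 h1
  have hbot : Filter.Tendsto F Filter.atBot (nhds 0) := by rw [hFc]; exact tendsto_cdf_atBot μ
  have htop : Filter.Tendsto F Filter.atTop (nhds 1) := by rw [hFc]; exact tendsto_cdf_atTop μ
  have hF0 : ∀ x, 0 ≤ F x := fun x => by rw [hF]; exact ENNReal.toReal_nonneg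
  have hF1 : ∀ x, F x ≤ 1 := fun x => by rw [hFc]; exact cdf_le_one μ x
  -- the key computation
  have key : ∀ y : ℝ, μ {x | F x ≤ y} = ENNReal.ofReal (min 1 y) := by
    intro y
    rcases lt_or_ge y 0 with hy | hy
    · have : {x | F x ≤ y} = ∅ := by
        ext x; simp only [Set.mem_setOf_eq, Set.mem_empty_iff_false, iff_false, not_le]
        exact lt_of_lt_of_le hy (hF0 x)
      rw [this, measure_empty, Eq.comm, ENNReal.ofReal_eq_zero]
      exact (min_le_right _ _).trans hy.le
    rcases le_or_gt 1 y with hy1 | hy1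
    · have : {x | F x ≤ y} = Set.univ := by
        ext x; simp only [Set.mem_setOf_eq, Set.mem_univ, iff_true]
        exact (hF1 x).trans hy1
      rw [this, measure_univ, min_eq_left hy1, ENNReal.ofReal_one]
    · rw [min_eq_right hy1.le]
      rcases Set.eq_empty_or_nonempty {x | F x ≤ y} with hA | hA
      · have hy0 : y ≤ 0 := by
          refine ge_of_tendsto hbot ?_
          filter_upwards with x
          by_contra h
          push_neg at h
          exact (Set.eq_empty_iff_forall_notMem.1 hA) x h.le
        rw [hA, measure_empty, Eq.comm, ENNReal.ofReal_eq_zero]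
        exact hy0
      · have hclosed : IsClosed {x | F x ≤ y} := isClosed_le hcont continuous_const
        have hbdd : BddAbove {x | F x ≤ y} := by
          obtain ⟨B, hB⟩ := (htop.eventually_const_lt hy1).exists_forall_of_atTop
          exact ⟨B, fun x hx => by
            by_contra h
            push_neg at h
            exact absurd hx (by simpa using (hB x h.le).not_ge)⟩
        set s := sSup {x | F x ≤ y} with hs
        have hsmem : s ∈ {x | F x ≤ y} := hclosed.csSup_mem hA hbdd
        have hAe : {x | F x ≤ y} = Set.Iic s := by
          apply Set.Subset.antisymm
          · exact fun x hx => le_csSup hbdd hx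
          · exact fun x hx => le_trans (hmono hx) hsmem
        have hFs : F s = y := by
          refine le_antisymm hsmem ?_
          have hev : ∀ᶠ t in nhdsWithin s (Set.Ioi s), y ≤ F t := by
            filter_upwards [self_mem_nhdsWithin] with t ht
            by_contra h
            push_neg at h
            exact absurd (le_csSup hbdd (Set.mem_setOf_eq ▸ h.le)) (not_le.2 ht)
          exact ge_of_tendsto ((hcont.continuousAt).mono_left nhdsWithin_le_nhds) hev
        rw [hAe, ← hFs, hF s]
        exact (ENNReal.ofReal_toReal (measure_ne_top μ _)).symm
  -- conclude
  have hFm : Measurable F := hmono.measurable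
  have : IsProbabilityMeasure (volume.restrict (Set.Ioc (0:ℝ) 1)) := by
    constructor
    simp [Real.volume_Ioc]
  haveI : IsProbabilityMeasure (Measure.map F μ) := Measure.isProbabilityMeasure_map hFm.aemeasurable
  refine Measure.eq_of_cdf _ _ ?_
  ext y
  rw [cdf_eq_real, cdf_eq_real, measureReal_def, measureReal_def, Measure.map_apply hFm measurableSet_Iic,
    Measure.restrict_apply measurableSet_Iic]
  have h1 : F ⁻¹' Set.Iic y = {x | F x ≤ y} := rfl
  have h2 : Set.Iic y ∩ Set.Ioc 0 1 = Set.Ioc 0 (min 1 y) := by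
    ext t
    simp only [Set.mem_inter_iff, Set.mem_Iic, Set.mem_Ioc, le_min_iff]
    constructor
    · rintro ⟨h, h0, h1⟩; exact ⟨h0, h1, h⟩
    · rintro ⟨h0, h1, h⟩; exact ⟨h, h0, h1⟩
  rw [h1, h2, key y, Real.volume_Ioc]
  norm_num

lemma fbf_cont (k : ℤ) : Continuous (fourierBasisFun k) := by
  rcases lt_trichotomy k 0 with h | h | h
  · rw [fbf_neg h]; continuity
  · subst h; rw [fbf_zero]; continuity
  · rw [fbf_pos h]; continuity

end helpers

/-- Orthonormality of the moving frame `{e_k ∘ F}` in `L²(μ)` for a nonatomic Borel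
probability measure `μ` on `ℝ` with CDF `F`. -/
theorem stmt_13 (μ : Measure ℝ) [IsProbabilityMeasure μ] [NullSingletonClass μ]
    (F : ℝ → ℝ) (hF : ∀ x, F x = (μ (Set.Iic x)).toReal) (j k : ℤ) :
    ∫ x, fourierBasisFun j (F x) * fourierBasisFun k (F x) ∂μ =
      if j = k then 1 else 0 := by
  have hFc : F = ⇑(ProbabilityTheory.cdf μ) := by ext x; rw [hF x, ProbabilityTheory.cdf_eq_real, measureReal_def]
  have hFm : Measurable F := hFc ▸ (ProbabilityTheory.monotone_cdf μ).measurable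
  have hg : Continuous (fun y => fourierBasisFun j y * fourierBasisFun k y) :=
    (fbf_cont j).mul (fbf_cont k)
  have h1 : ∫ x, fourierBasisFun j (F x) * fourierBasisFun k (F x) ∂μ
      = ∫ y, fourierBasisFun j y * fourierBasisFun k y ∂(Measure.map F μ) :=
    (integral_map hFm.aemeasurable hg.aestronglyMeasurable).symm
  rw [h1, measure_part μ F hF, ← intervalIntegral.integral_of_le (by norm_num : (0:ℝ) ≤ 1),
    ortho j k]
end

section
/- Let μ be a nonatomic Borel probability measure on ℝ with cumulative distribution function F(x) = μ((−∞, x]), let β > 1, and for k ∈ ℤ define e_k : ℝ → ℝ by e_k(x) = √2·sin(2πkx) for k ≥ 1, e_0(x) = 1, e_k(x) = √2·cos(2π|k|x) for k ≤ −1, and set λ_k = 1/|k|^{2β} for k ≠ 0, λ_0 = 1. Then for every j ∈ ℤ and every x ∈ ℝ: ∫_ℝ (1 + Σ_{k=1}^∞ (2/k^{2β})·cos(2πk(F(x) − F(y))))·e_j(F(y)) dμ(y) = λ_j · e_j(F(x)). -/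
open Real MeasureTheory Set intervalIntegral Filter Topology ProbabilityTheory

/-- The eigenvalues `λ_k = 1/|k|^{2β}` for `k ≠ 0`, `λ_0 = 1`. -/
noncomputable def lambdaCoeff (β : ℝ) (k : ℤ) : ℝ :=
  if k = 0 then 1 else 1 / (((|k| : ℤ) : ℝ)) ^ (2 * β)



lemma cdf_continuous (μ : Measure ℝ) [IsProbabilityMeasure μ] [NullSingletonClass μ] :
    Continuous (cdf μ) := by
  rw [continuous_iff_continuousAt]
  intro x
  rw [(monotone_cdf μ).continuousAt_iff_leftLim_eq_rightLim, (cdf μ).rightLim_eq]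
  have h := (cdf μ).measure_singleton x
  rw [measure_cdf] at h
  have h0 : μ {x} = 0 := measure_singleton x
  rw [h0, eq_comm, ENNReal.ofReal_eq_zero] at h
  have h2 : Function.leftLim (cdf μ) x ≤ cdf μ x := (monotone_cdf μ).leftLim_le le_rfl
  linarith

lemma cdf_map (μ : Measure ℝ) [IsProbabilityMeasure μ] [NullSingletonClass μ] :
    μ.map (cdf μ) = volume.restrict (Icc (0:ℝ) 1) := by
  refine Measure.ext_of_Iic _ _ (fun t => ?_)
  have hmeas : Measurable (cdf μ) := (monotone_cdf μ).measurable
  rw [Measure.map_apply hmeas measurableSet_Iic, Measure.restrict_apply measurableSet_Iic]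
  have hvol : Iic t ∩ Icc (0:ℝ) 1 = if 0 ≤ t then Icc 0 (min t 1) else ∅ := by
    split_ifs with h
    · ext y; simp only [mem_inter_iff, mem_Iic, mem_Icc, le_min_iff]; tauto
    · ext y; simp only [mem_inter_iff, mem_Iic, mem_Icc, mem_empty_iff_false, iff_false]
      rintro ⟨hy, h0, -⟩; linarith
  rw [hvol]
  rcases lt_or_ge t 0 with ht | ht
  · rw [if_neg (not_le.mpr ht)]
    have : cdf μ ⁻¹' Iic t = ∅ := by
      ext y; simp only [mem_preimage, mem_Iic, mem_empty_iff_false, iff_false, not_le]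
      exact lt_of_lt_of_le ht (cdf_nonneg μ y)
    simp [this]
  · rw [if_pos ht, Real.volume_Icc]
    rcases le_or_gt 1 t with ht1 | ht1
    · have : cdf μ ⁻¹' Iic t = univ := by
        ext y; simp only [mem_preimage, mem_Iic, mem_univ, iff_true]
        exact (cdf_le_one μ y).trans ht1
      rw [this, measure_univ, min_eq_right ht1]
      norm_num
    · rw [min_eq_left ht1.le, sub_zero]
      set S : Set ℝ := cdf μ ⁻¹' Iic t with hS
      have hclosed : IsClosed S := IsClosed.preimage (cdf_continuous μ) isClosed_Iic
      rcases eq_empty_or_nonempty S with hemp | hne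
      · -- then t = 0
        have ht0 : t = 0 := by
          by_contra h
          have htpos : 0 < t := lt_of_le_of_ne ht (Ne.symm h)
          obtain ⟨y, hy⟩ : ∃ y, cdf μ y < t := by
            have := (tendsto_cdf_atBot μ).eventually (eventually_lt_nhds htpos)
            exact this.exists
          have hyS : y ∈ S := le_of_lt hy
          rw [hemp] at hyS
          exact hyS
        rw [hemp, ht0]
        simp
      · have hbdd : BddAbove S := by
          obtain ⟨z, hz⟩ : ∃ z, t < cdf μ z := by
            have := (tendsto_cdf_atTop μ).eventually (eventually_gt_nhds ht1)
            exact this.exists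
          refine ⟨z, fun y hy => ?_⟩
          by_contra h
          have : cdf μ z ≤ cdf μ y := (monotone_cdf μ) (le_of_not_ge h)
          have hyt : cdf μ y ≤ t := hy
          linarith
        set s := sSup S with hs
        have hsmem : s ∈ S := hclosed.csSup_mem hne hbdd
        have hSeq : S = Iic s := by
          ext y
          constructor
          · intro hy; exact le_csSup hbdd hy
          · intro hy
            exact le_trans ((monotone_cdf μ) hy) hsmem
        have hcs : cdf μ s = t := by
          refine le_antisymm hsmem ?_
          by_contra h
          push_neg at h
          have : ∀ᶠ y in 𝓝[>] s, cdf μ y < t :=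
            eventually_nhdsWithin_of_eventually_nhds
              (((cdf_continuous μ).continuousAt).eventually (eventually_lt_nhds h))
          obtain ⟨y, hy1, hy2⟩ := this.and self_mem_nhdsWithin |>.exists
          have : y ∈ S := le_of_lt hy1
          rw [hSeq] at this
          exact absurd hy2 (not_lt.mpr this)
        rw [hSeq, ← ofReal_cdf μ s, hcs]


lemma int_cos (n : ℤ) : ∫ u in (0:ℝ)..1, Real.cos (2*π*n*u) = if n = 0 then 1 else 0 := by
  rcases eq_or_ne n 0 with h | h
  · simp [h]
  · rw [if_neg h]
    have hc : (2*π*(n:ℝ)) ≠ 0 := by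
      have := Real.pi_ne_zero
      have : (n:ℝ) ≠ 0 := Int.cast_ne_zero.mpr h
      positivity
    have := intervalIntegral.integral_comp_mul_left (a := (0:ℝ)) (b := 1)
      (f := fun x => Real.cos x) (c := 2*π*(n:ℝ)) hc
    simp only [mul_zero, mul_one] at this
    have h2 : ∀ u : ℝ, Real.cos (2*π*(n:ℝ)*u) = (fun x => Real.cos x) (2*π*(n:ℝ)*u) := fun _ => rfl
    rw [show (fun u => Real.cos (2*π*(n:ℝ)*u)) = (fun u => (fun x => Real.cos x) ((2*π*(n:ℝ))*u)) by ext u; ring_nf] at *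
    rw [this, integral_cos]
    have : Real.sin (2*π*(n:ℝ)) = 0 := by
      have := Real.sin_int_mul_two_pi_sub 0 n
      simp at this
      rw [show 2*π*(n:ℝ) = (n:ℝ)*(2*π) by ring, this]
    rw [this, Real.sin_zero]
    simp

lemma int_sin (n : ℤ) : ∫ u in (0:ℝ)..1, Real.sin (2*π*n*u) = 0 := by
  rcases eq_or_ne n 0 with h | h
  · simp [h]
  · have hc : (2*π*(n:ℝ)) ≠ 0 := by
      have := Real.pi_ne_zero
      have : (n:ℝ) ≠ 0 := Int.cast_ne_zero.mpr h
      positivity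
    have := intervalIntegral.integral_comp_mul_left (a := (0:ℝ)) (b := 1)
      (f := fun x => Real.sin x) (c := 2*π*(n:ℝ)) hc
    simp only [mul_zero, mul_one] at this
    rw [show (fun u => Real.sin (2*π*(n:ℝ)*u)) = (fun u => (fun x => Real.sin x) ((2*π*(n:ℝ))*u)) by ext u; ring_nf] at *
    rw [this, integral_sin]
    have : Real.cos (2*π*(n:ℝ)) = 1 := by
      rw [show 2*π*(n:ℝ) = (n:ℝ)*(2*π) by ring]
      exact Real.cos_int_mul_two_pi n
    rw [this, Real.cos_zero]
    simp

lemma int_cos_cos (m n : ℤ) : ∫ u in (0:ℝ)..1, Real.cos (2*π*m*u) * Real.cos (2*π*n*u)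
    = ((if m = n then 1 else 0) + (if m = -n then 1 else 0))/2 := by
  have hpt : ∀ u:ℝ, Real.cos (2*π*m*u) * Real.cos (2*π*n*u)
      = (Real.cos (2*π*((m-n:ℤ):ℝ)*u) + Real.cos (2*π*((m+n:ℤ):ℝ)*u))/2 := by
    intro u
    rw [show (2*π*((m-n:ℤ):ℝ)*u) = 2*π*m*u - 2*π*n*u by push_cast; ring,
        show (2*π*((m+n:ℤ):ℝ)*u) = 2*π*m*u + 2*π*n*u by push_cast; ring,
        Real.cos_sub, Real.cos_add]
    ring
  simp_rw [hpt]
  rw [intervalIntegral.integral_div, intervalIntegral.integral_add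
    ((by fun_prop : Continuous fun u:ℝ => Real.cos (2*π*((m-n:ℤ):ℝ)*u)).intervalIntegrable 0 1)
    ((by fun_prop : Continuous fun u:ℝ => Real.cos (2*π*((m+n:ℤ):ℝ)*u)).intervalIntegrable 0 1),
    int_cos, int_cos]
  simp [sub_eq_zero, add_eq_zero_iff_eq_neg]

lemma int_sin_sin (m n : ℤ) : ∫ u in (0:ℝ)..1, Real.sin (2*π*m*u) * Real.sin (2*π*n*u)
    = ((if m = n then 1 else 0) - (if m = -n then 1 else 0))/2 := by
  have hpt : ∀ u:ℝ, Real.sin (2*π*m*u) * Real.sin (2*π*n*u)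
      = (Real.cos (2*π*((m-n:ℤ):ℝ)*u) - Real.cos (2*π*((m+n:ℤ):ℝ)*u))/2 := by
    intro u
    rw [show (2*π*((m-n:ℤ):ℝ)*u) = 2*π*m*u - 2*π*n*u by push_cast; ring,
        show (2*π*((m+n:ℤ):ℝ)*u) = 2*π*m*u + 2*π*n*u by push_cast; ring,
        Real.cos_sub, Real.cos_add]
    ring
  simp_rw [hpt]
  rw [intervalIntegral.integral_div, intervalIntegral.integral_sub
    ((by fun_prop : Continuous fun u:ℝ => Real.cos (2*π*((m-n:ℤ):ℝ)*u)).intervalIntegrable 0 1)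
    ((by fun_prop : Continuous fun u:ℝ => Real.cos (2*π*((m+n:ℤ):ℝ)*u)).intervalIntegrable 0 1),
    int_cos, int_cos]
  simp [sub_eq_zero, add_eq_zero_iff_eq_neg]

lemma int_cos_sin (m n : ℤ) : ∫ u in (0:ℝ)..1, Real.cos (2*π*m*u) * Real.sin (2*π*n*u) = 0 := by
  have hpt : ∀ u:ℝ, Real.cos (2*π*m*u) * Real.sin (2*π*n*u)
      = (Real.sin (2*π*((n+m:ℤ):ℝ)*u) + Real.sin (2*π*((n-m:ℤ):ℝ)*u))/2 := by
    intro u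
    rw [show (2*π*((n-m:ℤ):ℝ)*u) = 2*π*n*u - 2*π*m*u by push_cast; ring,
        show (2*π*((n+m:ℤ):ℝ)*u) = 2*π*n*u + 2*π*m*u by push_cast; ring,
        Real.sin_sub, Real.sin_add]
    ring
  simp_rw [hpt]
  rw [intervalIntegral.integral_div, intervalIntegral.integral_add
    ((by fun_prop : Continuous fun u:ℝ => Real.sin (2*π*((n+m:ℤ):ℝ)*u)).intervalIntegrable 0 1)
    ((by fun_prop : Continuous fun u:ℝ => Real.sin (2*π*((n-m:ℤ):ℝ)*u)).intervalIntegrable 0 1),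
    int_sin, int_sin]
  norm_num

lemma fourier_cont (j : ℤ) : Continuous (fourierBasisFun j) := by
  unfold fourierBasisFun
  split_ifs <;> fun_prop

lemma int_e (j : ℤ) : ∫ u in (0:ℝ)..1, fourierBasisFun j u = if j = 0 then 1 else 0 := by
  rcases eq_or_ne j 0 with hj | hj
  · simp [hj, fourierBasisFun]
  · rw [if_neg hj]
    rcases lt_or_gt_of_ne hj with hneg | hpos
    · have he : fourierBasisFun j = fun u => Real.sqrt 2 * Real.cos (2*π*((|j|:ℤ):ℝ)*u) := by
        funext u; simp [fourierBasisFun, hj, not_lt.mpr hneg.le]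
      rw [he, intervalIntegral.integral_const_mul, int_cos]
      have : |j| ≠ 0 := by simpa using hj
      simp [this]
    · have he : fourierBasisFun j = fun u => Real.sqrt 2 * Real.sin (2*π*(j:ℝ)*u) := by
        funext u; simp [fourierBasisFun, hj, hpos]
      rw [he, intervalIntegral.integral_const_mul, int_sin]
      simp

lemma key_int (m j : ℤ) (hm : 1 ≤ m) (c : ℝ) :
    ∫ u in (0:ℝ)..1, Real.cos (2*π*(m:ℝ)*(c-u)) * fourierBasisFun j u
      = if m = |j| then fourierBasisFun j c / 2 else 0 := by
  rcases eq_or_ne j 0 with hj | hj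
  · have he : fourierBasisFun j = fun _ => (1:ℝ) := by funext u; simp [hj, fourierBasisFun]
    rw [he]
    have hm0 : m ≠ 0 := by omega
    have hpt : ∀ u:ℝ, Real.cos (2*π*(m:ℝ)*(c-u)) * (1:ℝ)
        = Real.cos (2*π*(m:ℝ)*c) * Real.cos (2*π*(m:ℝ)*u)
          + Real.sin (2*π*(m:ℝ)*c) * Real.sin (2*π*(m:ℝ)*u) := by
      intro u
      rw [show 2*π*(m:ℝ)*(c-u) = 2*π*(m:ℝ)*c - 2*π*(m:ℝ)*u by ring, Real.cos_sub]
      ring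
    simp_rw [hpt]
    rw [intervalIntegral.integral_add
      ((by fun_prop : Continuous fun u:ℝ => Real.cos (2*π*(m:ℝ)*c) * Real.cos (2*π*(m:ℝ)*u)).intervalIntegrable 0 1)
      ((by fun_prop : Continuous fun u:ℝ => Real.sin (2*π*(m:ℝ)*c) * Real.sin (2*π*(m:ℝ)*u)).intervalIntegrable 0 1),
      intervalIntegral.integral_const_mul, intervalIntegral.integral_const_mul,
      int_cos, int_sin]
    simp [hj, hm0]
  · rcases lt_or_gt_of_ne hj with hneg | hpos
    · -- j < 0 : cosine case
      have he : fourierBasisFun j = fun u => Real.sqrt 2 * Real.cos (2*π*((|j|:ℤ):ℝ)*u) := by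
        funext u; simp [fourierBasisFun, hj, not_lt.mpr hneg.le]
      rw [he]
      have hpt : ∀ u:ℝ, Real.cos (2*π*(m:ℝ)*(c-u)) * (Real.sqrt 2 * Real.cos (2*π*((|j|:ℤ):ℝ)*u))
          = (Real.sqrt 2 * Real.cos (2*π*(m:ℝ)*c)) * (Real.cos (2*π*(m:ℝ)*u) * Real.cos (2*π*((|j|:ℤ):ℝ)*u))
            + (Real.sqrt 2 * Real.sin (2*π*(m:ℝ)*c)) * (Real.sin (2*π*(m:ℝ)*u) * Real.cos (2*π*((|j|:ℤ):ℝ)*u)) := by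
        intro u
        rw [show 2*π*(m:ℝ)*(c-u) = 2*π*(m:ℝ)*c - 2*π*(m:ℝ)*u by ring, Real.cos_sub]
        ring
      simp_rw [hpt]
      rw [intervalIntegral.integral_add
        ((by fun_prop : Continuous fun u:ℝ => (Real.sqrt 2 * Real.cos (2*π*(m:ℝ)*c)) * (Real.cos (2*π*(m:ℝ)*u) * Real.cos (2*π*((|j|:ℤ):ℝ)*u))).intervalIntegrable 0 1)
        ((by fun_prop : Continuous fun u:ℝ => (Real.sqrt 2 * Real.sin (2*π*(m:ℝ)*c)) * (Real.sin (2*π*(m:ℝ)*u) * Real.cos (2*π*((|j|:ℤ):ℝ)*u))).intervalIntegrable 0 1),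
        intervalIntegral.integral_const_mul, intervalIntegral.integral_const_mul,
        int_cos_cos]
      have hcs : ∫ u in (0:ℝ)..1, Real.sin (2*π*(m:ℝ)*u) * Real.cos (2*π*((|j|:ℤ):ℝ)*u) = 0 := by
        have := int_cos_sin |j| m
        have hcomm : ∀ u:ℝ, Real.sin (2*π*(m:ℝ)*u) * Real.cos (2*π*((|j|:ℤ):ℝ)*u)
            = Real.cos (2*π*((|j|:ℤ):ℝ)*u) * Real.sin (2*π*(m:ℝ)*u) := fun u => mul_comm _ _
        simp_rw [hcomm]
        exact this
      rw [hcs, mul_zero, add_zero]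
      have hne : m ≠ -|j| := by
        have h1 : 1 ≤ |j| := Int.one_le_abs (by omega)
        omega
      rcases eq_or_ne m |j| with heq | hne2
      · rw [if_pos heq, if_pos heq, if_neg hne, heq]
        ring
      · rw [if_neg hne2, if_neg hne2, if_neg hne]
        norm_num
    · -- j > 0 : sine case
      have he : fourierBasisFun j = fun u => Real.sqrt 2 * Real.sin (2*π*(j:ℝ)*u) := by
        funext u; simp [fourierBasisFun, hj, hpos]
      rw [he]
      have hpt : ∀ u:ℝ, Real.cos (2*π*(m:ℝ)*(c-u)) * (Real.sqrt 2 * Real.sin (2*π*(j:ℝ)*u))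
          = (Real.sqrt 2 * Real.cos (2*π*(m:ℝ)*c)) * (Real.cos (2*π*(m:ℝ)*u) * Real.sin (2*π*(j:ℝ)*u))
            + (Real.sqrt 2 * Real.sin (2*π*(m:ℝ)*c)) * (Real.sin (2*π*(m:ℝ)*u) * Real.sin (2*π*(j:ℝ)*u)) := by
        intro u
        rw [show 2*π*(m:ℝ)*(c-u) = 2*π*(m:ℝ)*c - 2*π*(m:ℝ)*u by ring, Real.cos_sub]
        ring
      simp_rw [hpt]
      rw [intervalIntegral.integral_add
        ((by fun_prop : Continuous fun u:ℝ => (Real.sqrt 2 * Real.cos (2*π*(m:ℝ)*c)) * (Real.cos (2*π*(m:ℝ)*u) * Real.sin (2*π*(j:ℝ)*u))).intervalIntegrable 0 1)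
        ((by fun_prop : Continuous fun u:ℝ => (Real.sqrt 2 * Real.sin (2*π*(m:ℝ)*c)) * (Real.sin (2*π*(m:ℝ)*u) * Real.sin (2*π*(j:ℝ)*u))).intervalIntegrable 0 1),
        intervalIntegral.integral_const_mul, intervalIntegral.integral_const_mul,
        int_cos_sin, int_sin_sin]
      have habs : |j| = j := abs_of_pos hpos
      rw [habs]
      have hne : m ≠ -j := by omega
      rcases eq_or_ne m j with heq | hne2
      · subst heq
        rw [if_pos rfl, if_pos rfl, if_neg hne]
        ring
      · rw [if_neg hne2, if_neg hne2, if_neg hne]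
        norm_num

lemma norm_e_le (j : ℤ) (v : ℝ) : ‖fourierBasisFun j v‖ ≤ Real.sqrt 2 := by
  have h2 : (1:ℝ) ≤ Real.sqrt 2 := by
    nlinarith [Real.sq_sqrt (by norm_num : (2:ℝ) ≥ 0), Real.sqrt_nonneg 2]
  unfold fourierBasisFun
  split_ifs
  · simpa using h2
  · rw [norm_mul, Real.norm_eq_abs, Real.norm_eq_abs, abs_of_nonneg (Real.sqrt_nonneg 2)]
    calc Real.sqrt 2 * |Real.sin _| ≤ Real.sqrt 2 * 1 :=
      mul_le_mul_of_nonneg_left (Real.abs_sin_le_one _) (Real.sqrt_nonneg 2)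
    _ = Real.sqrt 2 := mul_one _
  · rw [norm_mul, Real.norm_eq_abs, Real.norm_eq_abs, abs_of_nonneg (Real.sqrt_nonneg 2)]
    calc Real.sqrt 2 * |Real.cos _| ≤ Real.sqrt 2 * 1 :=
      mul_le_mul_of_nonneg_left (Real.abs_cos_le_one _) (Real.sqrt_nonneg 2)
    _ = Real.sqrt 2 := mul_one _

lemma a_summable {β : ℝ} (hβ : 1 < β) :
    Summable (fun k : ℕ => 2 / ((k:ℝ)+1) ^ (2*β)) := by
  have h1 : Summable (fun n : ℕ => 1 / (n:ℝ) ^ (2*β)) :=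
    Real.summable_one_div_nat_rpow.mpr (by linarith)
  have h2 : Summable (fun n : ℕ => 1 / ((n:ℝ)+1) ^ (2*β)) := by
    have := (summable_nat_add_iff 1).mpr h1
    simpa [Nat.cast_add] using this
  simpa [div_eq_mul_inv, mul_assoc] using h2.mul_left 2

lemma a_nonneg {β : ℝ} (k : ℕ) : 0 ≤ 2 / ((k:ℝ)+1) ^ (2*β) := by positivity

lemma term_norm_le {β : ℝ} (k : ℕ) (c v : ℝ) :
    ‖2 / ((k:ℝ)+1) ^ (2*β) * Real.cos (2*π*((k:ℝ)+1)*(c-v))‖ ≤ 2 / ((k:ℝ)+1) ^ (2*β) := by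
  rw [norm_mul, Real.norm_eq_abs, Real.norm_eq_abs, abs_of_nonneg (a_nonneg k)]
  calc _ ≤ (2 / ((k:ℝ)+1) ^ (2*β)) * 1 :=
      mul_le_mul_of_nonneg_left (Real.abs_cos_le_one _) (a_nonneg k)
    _ = _ := mul_one _

lemma S_continuous {β : ℝ} (hβ : 1 < β) (c : ℝ) :
    Continuous (fun v : ℝ => ∑' k : ℕ, 2 / ((k:ℝ)+1) ^ (2*β) * Real.cos (2*π*((k:ℝ)+1)*(c-v))) := by
  apply continuous_tsum (fun k => by fun_prop) (a_summable hβ)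
  intro k v
  exact term_norm_le k c v

lemma main_calc (β : ℝ) (hβ : 1 < β) (j : ℤ) (c : ℝ) :
    ∫ v in (0:ℝ)..1, (1 + ∑' k:ℕ, 2/((k:ℝ)+1)^(2*β) * Real.cos (2*π*((k:ℝ)+1)*(c-v)))
        * fourierBasisFun j v
      = lambdaCoeff β j * fourierBasisFun j c := by
  have hS := S_continuous hβ c
  have he := fourier_cont j
  -- split the integrand
  have hsplit : ∀ v:ℝ, (1 + ∑' k:ℕ, 2/((k:ℝ)+1)^(2*β) * Real.cos (2*π*((k:ℝ)+1)*(c-v)))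
        * fourierBasisFun j v
      = fourierBasisFun j v
        + ∑' k:ℕ, (2/((k:ℝ)+1)^(2*β) * Real.cos (2*π*((k:ℝ)+1)*(c-v)) * fourierBasisFun j v) := by
    intro v
    rw [add_mul, one_mul, tsum_mul_right]
  simp_rw [hsplit]
  rw [intervalIntegral.integral_add (he.intervalIntegrable 0 1)
    (by
      apply Continuous.intervalIntegrable
      have : Continuous fun v:ℝ => (∑' k:ℕ, 2/((k:ℝ)+1)^(2*β) * Real.cos (2*π*((k:ℝ)+1)*(c-v))) * fourierBasisFun j v := hS.mul he
      simpa only [tsum_mul_right] using this),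
    int_e]
  -- swap sum and integral
  rw [intervalIntegral.integral_of_le zero_le_one,
    ← MeasureTheory.integral_tsum_of_summable_integral_norm
      (F := fun (k:ℕ) (v:ℝ) => 2/((k:ℝ)+1)^(2*β) * Real.cos (2*π*((k:ℝ)+1)*(c-v)) * fourierBasisFun j v)
      (fun k => ((by fun_prop : Continuous fun v:ℝ => 2/((k:ℝ)+1)^(2*β) * Real.cos (2*π*((k:ℝ)+1)*(c-v)) * fourierBasisFun j v).integrableOn_Ioc))
      (by
        apply Summable.of_nonneg_of_le (fun k => integral_nonneg (fun v => norm_nonneg _))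
          (fun k => ?_) ((a_summable hβ).mul_right (Real.sqrt 2))
        calc ∫ v in Set.Ioc (0:ℝ) 1, ‖2/((k:ℝ)+1)^(2*β) * Real.cos (2*π*((k:ℝ)+1)*(c-v)) * fourierBasisFun j v‖
            ≤ ∫ _v in Set.Ioc (0:ℝ) 1, (2/((k:ℝ)+1)^(2*β)) * Real.sqrt 2 := by
              apply integral_mono_of_nonneg (Filter.Eventually.of_forall (fun v => norm_nonneg _))
                (integrableOn_const (by simp [Real.volume_Ioc]))
              apply Filter.Eventually.of_forall
              intro v
              dsimp only
              rw [norm_mul]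
              exact mul_le_mul (term_norm_le k c v) (norm_e_le j v) (norm_nonneg _) (a_nonneg k)
          _ = (2/((k:ℝ)+1)^(2*β)) * Real.sqrt 2 := by
              simp [Real.volume_Ioc])]
  -- compute each term
  have hterm : ∀ k:ℕ, ∫ v in Set.Ioc (0:ℝ) 1,
      2/((k:ℝ)+1)^(2*β) * Real.cos (2*π*((k:ℝ)+1)*(c-v)) * fourierBasisFun j v
      = 2/((k:ℝ)+1)^(2*β) * (if ((k:ℤ)+1) = |j| then fourierBasisFun j c / 2 else 0) := by
    intro k
    rw [← intervalIntegral.integral_of_le zero_le_one]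
    have hassoc : ∀ v:ℝ, 2/((k:ℝ)+1)^(2*β) * Real.cos (2*π*((k:ℝ)+1)*(c-v)) * fourierBasisFun j v
        = 2/((k:ℝ)+1)^(2*β) * (Real.cos (2*π*((k:ℝ)+1)*(c-v)) * fourierBasisFun j v) :=
      fun v => mul_assoc _ _ _
    simp_rw [hassoc]
    rw [intervalIntegral.integral_const_mul]
    congr 1
    have hki := key_int ((k:ℤ)+1) j (by omega) c
    rw [show ((((k:ℤ)+1):ℤ):ℝ) = (k:ℝ)+1 by push_cast; ring] at hki
    exact hki
  simp_rw [hterm]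
  -- final evaluation
  rcases eq_or_ne j 0 with hj | hj
  · subst hj
    have : ∀ k:ℕ, (2/((k:ℝ)+1)^(2*β) * (if ((k:ℤ)+1) = |(0:ℤ)| then fourierBasisFun 0 c / 2 else 0)) = 0 := by
      intro k
      rw [if_neg (by push_cast [abs_zero]; omega), mul_zero]
    simp_rw [this]
    simp [lambdaCoeff, fourierBasisFun]
  · rw [if_neg hj, zero_add]
    set n : ℕ := |j|.toNat with hn
    have hn1 : 1 ≤ n := by
      have := Int.one_le_abs hj
      omega
    have habs : (|j| : ℤ) = ((n:ℕ):ℤ) := by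
      rw [hn]; exact (Int.toNat_of_nonneg (abs_nonneg j)).symm
    rw [tsum_eq_single (n-1) (by
      intro k hk
      rw [if_neg (by rw [habs]; push_cast; omega), mul_zero])]
    rw [if_pos (by rw [habs]; push_cast; omega)]
    have hx : ((n-1:ℕ):ℝ)+1 = ((|j|:ℤ):ℝ) := by
      rw [habs, Int.cast_natCast, Nat.cast_sub hn1]
      simp
    rw [hx, lambdaCoeff, if_neg hj]
    ring

/-- `e_j ∘ F` is an eigenfunction with eigenvalue `λ_j` of the integral operator with
kernel `K̄_β(F(x) − F(y)) = 1 + Σ_k (2/k^{2β}) cos(2πk(F(x) − F(y)))` on `L²(μ)`,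
for a nonatomic Borel probability measure `μ` on `ℝ` with CDF `F` and `β > 1`. -/
theorem stmt_14 (μ : Measure ℝ) [IsProbabilityMeasure μ] [NullSingletonClass μ]
    (F : ℝ → ℝ) (hF : ∀ x, F x = (μ (Set.Iic x)).toReal)
    (β : ℝ) (hβ : 1 < β) (j : ℤ) (x : ℝ) :
    ∫ y, (1 + ∑' k : ℕ, 2 / ((k : ℝ) + 1) ^ (2 * β) *
          Real.cos (2 * π * ((k : ℝ) + 1) * (F x - F y))) * fourierBasisFun j (F y) ∂μ =
      lambdaCoeff β j * fourierBasisFun j (F x) := by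
  have hFeq : F = fun y => cdf μ y := by
    funext y; rw [hF, cdf_eq_real, measureReal_def]
  set c := F x with hc
  set G : ℝ → ℝ := fun v => (1 + ∑' k : ℕ, 2 / ((k : ℝ) + 1) ^ (2 * β) *
      Real.cos (2 * π * ((k : ℝ) + 1) * (c - v))) * fourierBasisFun j v with hG
  have hGcont : Continuous G := by
    rw [hG]
    exact (continuous_const.add (S_continuous hβ c)).mul (fourier_cont j)
  have hmeas : Measurable (cdf μ) := (monotone_cdf μ).measurable
  have key : ∫ y, G (F y) ∂μ = lambdaCoeff β j * fourierBasisFun j c := by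
    rw [hFeq]
    rw [← MeasureTheory.integral_map hmeas.aemeasurable hGcont.aestronglyMeasurable,
      cdf_map, MeasureTheory.integral_Icc_eq_integral_Ioc,
      ← intervalIntegral.integral_of_le zero_le_one]
    exact main_calc β hβ j c
  exact key
end

section
/- Let g : ℝ → ℝ be differentiable, 1-periodic, with |g'(x)| ≤ C for all x, and let x_1, …, x_N be real numbers such that 2(x_i − x_j) ∉ ℤ for all i ≠ j. Then |Σ_{1≤i<j≤N} (g(x_i) − g(x_j))·cot(π(x_i − x_j))| ≤ C·N·(N−1)/(2π), where cot t = cos t / sin t. -/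
open Real Finset

lemma term_bound (g : ℝ → ℝ) (hg : Differentiable ℝ g) (hper : ∀ x, g (x + 1) = g x)
    (C : ℝ) (hC : ∀ x, |deriv g x| ≤ C) (a b : ℝ)
    (h2 : ∀ n : ℤ, (n : ℝ) ≠ 2 * (a - b)) :
    |(g a - g b) * (Real.cos (π * (a - b)) / Real.sin (π * (a - b)))| ≤ C / π := by
  have hC0 : 0 ≤ C := le_trans (abs_nonneg _) (hC 0)
  set d := a - b with hd
  set n : ℤ := round d with hn
  set s : ℝ := d - n with hs
  have hs2 : ∀ m : ℤ, (m : ℝ) ≠ 2 * s := by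
    intro m hm
    apply h2 (m + 2 * n)
    push_cast
    rw [hm]; ring
  have habs : |s| ≤ 1/2 := by
    simpa [hs] using abs_sub_round d
  have hs0 : s ≠ 0 := by
    intro h
    exact hs2 0 (by simp [h])
  have hlt : |s| < 1/2 := by
    rcases lt_or_eq_of_le habs with h | h
    · exact h
    · exfalso
      rcases abs_eq (by norm_num : (0:ℝ) ≤ 1/2) |>.mp h with h | h
      · exact hs2 1 (by rw [h]; norm_num)
      · exact hs2 (-1) (by rw [h]; norm_num)
  -- numerator via periodicity
  have hper' : Function.Periodic g 1 := hper
  have hnum : g a - g b = g (b + s) - g b := by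
    have : a = (b + s) + (n : ℝ) * 1 := by rw [hs, hd]; ring
    rw [this, (hper'.int_mul n) (b + s)]
  -- MVT bound
  have hmvt : |g (b + s) - g b| ≤ C * |s| := by
    have := Convex.norm_image_sub_le_of_norm_deriv_le
      (f := g) (s := Set.univ)
      (fun y _ => hg y) (fun y _ => by simpa using hC y)
      convex_univ (Set.mem_univ b) (Set.mem_univ (b + s))
    simpa [Real.norm_eq_abs, abs_sub_comm] using this
  -- trig reduction
  have hpd : π * d = π * s + (n : ℝ) * π := by rw [hs]; ring
  have hratio : Real.cos (π * d) / Real.sin (π * d) = Real.cos (π * s) / Real.sin (π * s) := by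
    rw [hpd, Real.cos_add_int_mul_pi, Real.sin_add_int_mul_pi,
      mul_div_mul_left _ _ (by positivity : ((-1:ℝ)) ^ n ≠ 0)]
  set θ : ℝ := π * |s| with hθ
  have hθ0 : 0 < θ := by positivity
  have hθlt : θ < π / 2 := by
    rw [hθ]
    calc π * |s| < π * (1/2) := by
          exact mul_lt_mul_of_pos_left hlt Real.pi_pos
      _ = π / 2 := by ring
  have hcosθ : 0 < Real.cos θ := Real.cos_pos_of_mem_Ioo ⟨by linarith, hθlt⟩
  have hsinθ : 0 < Real.sin θ := Real.sin_pos_of_pos_of_lt_pi hθ0 (by linarith [Real.pi_pos])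
  have habs_ratio : |Real.cos (π * s) / Real.sin (π * s)| = Real.cos θ / Real.sin θ := by
    rw [abs_div]
    congr 1
    · rw [← Real.cos_abs (π * s), abs_mul, abs_of_pos Real.pi_pos, ← hθ]
      exact abs_of_pos hcosθ
    · rcases le_or_gt 0 s with h | h
      · have hθs : θ = π * s := by rw [hθ, abs_of_nonneg h]
        rw [← hθs]; exact abs_of_pos hsinθ
      · have : π * s = -(π * |s|) := by rw [abs_of_neg h]; ring
        rw [this, Real.sin_neg, abs_neg, ← hθ, abs_of_pos hsinθ]
  have hcot : Real.cos θ / Real.sin θ ≤ 1 / θ := by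
    rw [div_le_div_iff₀ hsinθ hθ0]
    have := Real.lt_tan hθ0 hθlt
    rw [Real.tan_eq_sin_div_cos, lt_div_iff₀ hcosθ] at this
    nlinarith
  calc |(g a - g b) * (Real.cos (π * d) / Real.sin (π * d))|
      = |g (b + s) - g b| * (Real.cos θ / Real.sin θ) := by
        rw [abs_mul, hnum, hratio, habs_ratio]
    _ ≤ (C * |s|) * (1 / θ) := by
        apply mul_le_mul hmvt hcot (by positivity)
        positivity
    _ = C / π := by
        rw [hθ]
        field_simp

lemma count_lemma (N : ℕ) :
    ∑ i : Fin N, (((Finset.univ.filter (fun j => i < j)).card : ℝ)) =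
      (N : ℝ) * ((N : ℝ) - 1) / 2 := by
  have hfil : ∀ i : Fin N, Finset.univ.filter (fun j => i < j) = Finset.Ioi i := by
    intro i; ext j; simp
  simp only [hfil, Fin.card_Ioi]
  rw [Fin.sum_univ_eq_sum_range (fun k => ((N - 1 - k : ℕ) : ℝ)) N,
    Finset.sum_range_reflect (fun k => ((k : ℕ) : ℝ)) N]
  cases N with
  | zero => simp
  | succ M =>
    have h := Finset.sum_range_id_mul_two (M + 1)
    have h' : (∑ i ∈ Finset.range (M + 1), (i : ℝ)) * 2 = ((M : ℝ) + 1) * M := by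
      have h2 := congrArg (fun k : ℕ => (k : ℝ)) h
      push_cast [Nat.add_sub_cancel] at h2
      exact h2
    push_cast
    linarith

/-- Drift-term bound: for `g` differentiable, 1-periodic, `|g'| ≤ C`, and reals
`x_1,…,x_N` with `2(x_i − x_j) ∉ ℤ` for `i ≠ j`,
`|Σ_{i<j} (g(x_i) − g(x_j))·cot(π(x_i − x_j))| ≤ C·N·(N−1)/(2π)`,
where `cot t = cos t / sin t`. -/
theorem stmt_18 (g : ℝ → ℝ) (hg : Differentiable ℝ g) (hper : ∀ x, g (x + 1) = g x)
    (C : ℝ) (hC : ∀ x, |deriv g x| ≤ C) (N : ℕ) (x : Fin N → ℝ)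
    (hx : ∀ i j, i ≠ j → ∀ n : ℤ, (n : ℝ) ≠ 2 * (x i - x j)) :
    |∑ i : Fin N, ∑ j ∈ Finset.univ.filter (fun j => i < j),
        (g (x i) - g (x j)) *
          (Real.cos (π * (x i - x j)) / Real.sin (π * (x i - x j)))| ≤
      C * (N : ℝ) * ((N : ℝ) - 1) / (2 * π) := by
  have hC0 : 0 ≤ C := le_trans (abs_nonneg _) (hC 0)
  have step1 : |∑ i : Fin N, ∑ j ∈ Finset.univ.filter (fun j => i < j),
        (g (x i) - g (x j)) *
          (Real.cos (π * (x i - x j)) / Real.sin (π * (x i - x j)))| ≤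
      ∑ i : Fin N, ∑ _j ∈ Finset.univ.filter (fun j => i < j), (C / π) := by
    refine (Finset.abs_sum_le_sum_abs _ _).trans ?_
    apply Finset.sum_le_sum; intro i _
    refine (Finset.abs_sum_le_sum_abs _ _).trans ?_
    apply Finset.sum_le_sum; intro j hj
    exact term_bound g hg hper C hC _ _
      (hx i j (Finset.mem_filter.mp hj).2.ne)
  refine step1.trans ?_
  have hconst : ∑ i : Fin N, ∑ _j ∈ Finset.univ.filter (fun j => i < j), (C / π) =
      (∑ i : Fin N, ((Finset.univ.filter (fun j => i < j)).card : ℝ)) * (C / π) := by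
    simp [Finset.sum_const, nsmul_eq_mul, Finset.sum_mul]
  rw [hconst, count_lemma N]
  apply le_of_eq
  rw [div_mul_div_comm]
  ring
end
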